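/- arXiv:1509.07042 — 2 statements merged into one kernel-verified Lean document; each statement's English description precedes it below -/
import Mathlib

section
/- Let G be an abelian group and φ : G → G an injective group homomorphism such that the quotient group G/φ(G) is finite. Then for every n ≥ 1 the quotient G/φⁿ(G) is finite and its cardinality equals |G/φ(G)|ⁿ. -/
/-- Let `G` be an abelian group and `φ : G → G` an injective group
homomorphism such that `G ⧸ φ(G)` is finite.  Then for every `n ≥ 1` the quotient
`G ⧸ φⁿ(G)` is finite and its cardinality equals `|G ⧸ φ(G)|ⁿ`. -/
theorem statement2 {G : Type*} [CommGroup G] (φ : Monoid.End G)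
    (hφinj : Function.Injective φ)
    (hfin : Finite (G ⧸ MonoidHom.range (φ : G →* G))) :
    ∀ n : ℕ, 1 ≤ n →
      Finite (G ⧸ MonoidHom.range ((φ ^ n : Monoid.End G) : G →* G)) ∧
        Nat.card (G ⧸ MonoidHom.range ((φ ^ n : Monoid.End G) : G →* G)) =
          (Nat.card (G ⧸ MonoidHom.range (φ : G →* G))) ^ n := by
  -- the index of `range φ`
  set i := Nat.card (G ⧸ MonoidHom.range (φ : G →* G)) with hi
  have hipos : 0 < i := Nat.card_pos
  -- injectivity of iterates
  have hinj : ∀ n : ℕ, Function.Injective ((φ ^ n : Monoid.End G) : G →* G) := by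
    intro n
    induction n with
    | zero => exact fun a b h => h
    | succ n ih =>
      have : (φ ^ (n + 1) : Monoid.End G) = ((φ ^ n : Monoid.End G) : G →* G).comp φ := by
        rw [pow_succ]; rfl
      rw [this]
      exact ih.comp hφinj
  -- key cardinality computation (index form), valid for all n
  have key : ∀ n : ℕ,
      (MonoidHom.range ((φ ^ n : Monoid.End G) : G →* G)).index = i ^ n := by
    intro n
    induction n with
    | zero =>
      have : (MonoidHom.range ((φ ^ 0 : Monoid.End G) : G →* G)) = ⊤ := by
        rw [pow_zero]
        exact MonoidHom.range_eq_top_of_surjective _ (fun x => ⟨x, rfl⟩)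
      rw [this, Subgroup.index_top, pow_zero]
    | succ n ih =>
      have hcomp : (MonoidHom.range ((φ ^ (n + 1) : Monoid.End G) : G →* G)) =
          (MonoidHom.range (φ : G →* G)).map ((φ ^ n : Monoid.End G) : G →* G) := by
        have : (φ ^ (n + 1) : Monoid.End G) = ((φ ^ n : Monoid.End G) : G →* G).comp φ := by
          rw [pow_succ]; rfl
        rw [this]; exact MonoidHom.range_comp ..
      have hker : ((φ ^ n : Monoid.End G) : G →* G).ker = ⊥ :=
        (MonoidHom.ker_eq_bot_iff _).mpr (hinj n)
      rw [hcomp, Subgroup.index_map (H := MonoidHom.range (φ : G →* G)) ((φ ^ n : Monoid.End G) : G →* G), hker, sup_bot_eq, ih]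
      have : (MonoidHom.range (φ : G →* G)).index = i := rfl
      rw [this, pow_succ, mul_comm]
  intro n _
  have hcard : Nat.card (G ⧸ MonoidHom.range ((φ ^ n : Monoid.End G) : G →* G)) = i ^ n :=
    key n
  refine ⟨?_, hcard⟩
  exact Nat.finite_of_card_ne_zero (by rw [hcard]; positivity)
end

section
/- Let G be an abelian group and φ : G → G an injective group homomorphism such that the quotient group G/φ(G) is finite of cardinality at least 2. Let M be the inverse limit lim←ₙ G/φⁿ(G), realized as the subgroup of the product Πₙ G/φⁿ(G) consisting of sequences compatible with the canonical projections G/φ^{n+1}(G) → G/φⁿ(G), equipped with the subspace topology of the product of the discrete topologies. Then M is homeomorphic to the Cantor space ℕ → {0,1} (an infinite countable product of two-point discrete spaces). -/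
namespace Stmt3

variable {G : Type*} [CommGroup G]

/-- `φ^{n+1}(G) ≤ φⁿ(G)`. -/
lemma range_pow_succ_le (φ : Monoid.End G) (n : ℕ) :
    MonoidHom.range ((φ ^ (n + 1) : Monoid.End G) : G →* G) ≤
      MonoidHom.range ((φ ^ n : Monoid.End G) : G →* G) := by
  rintro y ⟨x, rfl⟩
  exact ⟨φ x, by rw [pow_succ]; rfl⟩

/-- The canonical projection `G ⧸ φ^{n+1}(G) → G ⧸ φⁿ(G)`. -/
noncomputable def transMap (φ : Monoid.End G) (n : ℕ) :
    G ⧸ MonoidHom.range ((φ ^ (n + 1) : Monoid.End G) : G →* G) →*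
      G ⧸ MonoidHom.range ((φ ^ n : Monoid.End G) : G →* G) :=
  QuotientGroup.map _ _ (MonoidHom.id G) (by simpa using range_pow_succ_le φ n)

/-- Each quotient carries the discrete topology. -/
instance (H : Subgroup G) : TopologicalSpace (G ⧸ H) := ⊥

/-- The inverse limit `M = lim←ₙ G ⧸ φⁿ(G)`, realized as the set of sequences in the
product `Πₙ G ⧸ φⁿ(G)` compatible with the canonical projections, with the subspace
topology of the product of the discrete topologies. -/
def InvLimit (φ : Monoid.End G) : Type _ :=
  {x : (n : ℕ) → G ⧸ MonoidHom.range ((φ ^ n : Monoid.End G) : G →* G) //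
    ∀ n : ℕ, transMap φ n (x (n + 1)) = x n}

noncomputable instance (φ : Monoid.End G) : TopologicalSpace (InvLimit φ) :=
  instTopologicalSpaceSubtype

end Stmt3

namespace Stmt3Aux

/-! ### Part B: coding `(ℕ → Fin d) ≃ (ℕ → Bool)` for `2 ≤ d` -/

def L (d k : ℕ) : ℕ := if k < d - 1 then k + 1 else d - 1

lemma one_le_L {d : ℕ} (hd : 2 ≤ d) (k : ℕ) : 1 ≤ L d k := by unfold L; split <;> omega

lemma L_eq (d k : ℕ) : L d k = if k < d - 1 then k + 1 else d - 1 := rfl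

def enc (d : ℕ) (hd : 2 ≤ d) (a : ℕ → ℕ) (m : ℕ) : Bool :=
  if _h : m < L d (a 0) then decide (m < a 0)
  else enc d hd (fun i => a (i + 1)) (m - L d (a 0))
termination_by m
decreasing_by
  have h1 := one_le_L hd (a 0); omega

lemma enc_eq (d : ℕ) (hd : 2 ≤ d) (a : ℕ → ℕ) (m : ℕ) :
    enc d hd a m = if m < L d (a 0) then decide (m < a 0)
      else enc d hd (fun i => a (i + 1)) (m - L d (a 0)) := by
  rw [enc]; simp

def fd (d : ℕ) (b : ℕ → Bool) : ℕ :=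
  Nat.find (⟨d - 1, Or.inl rfl⟩ : ∃ t, t = d - 1 ∨ b t = false)

def dec (d : ℕ) (b : ℕ → Bool) : ℕ → ℕ
  | 0 => fd d b
  | n + 1 => dec d (fun i => b (i + L d (fd d b))) n

lemma fd_le (d : ℕ) (b : ℕ → Bool) : fd d b ≤ d - 1 :=
  Nat.find_le (Or.inl rfl)

lemma fd_spec (d : ℕ) (b : ℕ → Bool) : fd d b = d - 1 ∨ b (fd d b) = false :=
  Nat.find_spec (⟨d - 1, Or.inl rfl⟩ : ∃ t, t = d - 1 ∨ b t = false)

lemma fd_min (d : ℕ) (b : ℕ → Bool) {s : ℕ} (h : s < fd d b) : s ≠ d - 1 ∧ b s = true := by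
  have := Nat.find_min (⟨d - 1, Or.inl rfl⟩ : ∃ t, t = d - 1 ∨ b t = false) h
  push_neg at this
  exact ⟨this.1, by simpa using this.2⟩

lemma fd_lt {d : ℕ} (hd : 2 ≤ d) (b : ℕ → Bool) : fd d b < d := by
  have := fd_le d b; omega

lemma dec_lt {d : ℕ} (hd : 2 ≤ d) (b : ℕ → Bool) (n : ℕ) : dec d b n < d := by
  induction n generalizing b with
  | zero => simpa only [dec] using fd_lt hd b
  | succ n IH => simp only [dec]; exact IH _

lemma enc_shift (d : ℕ) (hd : 2 ≤ d) (a : ℕ → ℕ) (i : ℕ) :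
    enc d hd a (i + L d (a 0)) = enc d hd (fun j => a (j + 1)) i := by
  rw [enc_eq, if_neg (by omega), Nat.add_sub_cancel]

lemma fd_enc {d : ℕ} (hd : 2 ≤ d) (a : ℕ → ℕ) (ha : a 0 < d) :
    fd d (enc d hd a) = a 0 := by
  have hL := L_eq d (a 0)
  apply le_antisymm
  · apply Nat.find_le
    by_cases h : a 0 = d - 1
    · exact Or.inl h
    · right
      rw [enc_eq, if_pos (by rw [hL]; split <;> omega)]
      simp
  · by_contra hcon
    push_neg at hcon
    rcases fd_spec d (enc d hd a) with h1 | h2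
    · omega
    · rw [enc_eq, if_pos (by rw [hL]; split <;> omega)] at h2
      simp at h2
      omega

lemma dec_enc {d : ℕ} (hd : 2 ≤ d) (a : ℕ → ℕ) (ha : ∀ n, a n < d) (n : ℕ) :
    dec d (enc d hd a) n = a n := by
  induction n generalizing a with
  | zero => simpa only [dec] using fd_enc hd a (ha 0)
  | succ n IH =>
    have h1 : (fun i => enc d hd a (i + L d (fd d (enc d hd a))))
        = enc d hd (fun j => a (j + 1)) := by
      funext i
      rw [fd_enc hd a (ha 0), enc_shift]
    simp only [dec, h1]
    exact IH (fun j => a (j + 1)) (fun j => ha (j + 1))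

lemma enc_dec {d : ℕ} (hd : 2 ≤ d) (b : ℕ → Bool) (m : ℕ) :
    enc d hd (dec d b) m = b m := by
  induction m using Nat.strong_induction_on generalizing b with
  | _ m IH =>
    have hd0 : dec d b 0 = fd d b := rfl
    have hshift : (fun i => dec d b (i + 1)) = dec d (fun i => b (i + L d (fd d b))) := by
      funext i; rfl
    have htle : fd d b ≤ d - 1 := fd_le d b
    have hspec := fd_spec d b
    have hmin : ∀ s, s < fd d b → b s = true := fun s hs => (fd_min d b hs).2
    rw [enc_eq, hd0]
    split
    · rename_i h
      have hL := L_eq d (fd d b)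
      by_cases hmt : m < fd d b
      · rw [hmin m hmt]; simp [hmt]
      · have h1 : fd d b < d - 1 := by rw [hL] at h; split at h <;> omega
        have hm : m = fd d b := by rw [hL] at h; split at h <;> omega
        have hbt : b (fd d b) = false := by
          rcases hspec with h2 | h2
          · omega
          · exact h2
        rw [hm, hbt]
        simp
    · rename_i h
      rw [hshift, IH (m - L d (fd d b)) (by have := one_le_L hd (fd d b); omega)]
      congr 1
      omega

lemma enc_prefix {d : ℕ} (hd : 2 ≤ d) (a a' : ℕ → ℕ) (m : ℕ) (h : ∀ i ≤ m, a i = a' i) :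
    enc d hd a m = enc d hd a' m := by
  induction m using Nat.strong_induction_on generalizing a a' with
  | _ m IH =>
    have h0 : a 0 = a' 0 := h 0 (Nat.zero_le m)
    rw [enc_eq d hd a m, enc_eq d hd a' m, h0]
    split
    · rfl
    · rename_i hcond
      have hL := one_le_L hd (a' 0)
      exact IH (m - L d (a' 0)) (by omega) _ _ (fun i hi => h (i + 1) (by omega))

/-! ### Part A: `InvLimit φ ≃ (ℕ → G ⧸ φ(G))` -/

open Stmt3

variable {G : Type*} [CommGroup G]

instance (H : Subgroup G) : DiscreteTopology (G ⧸ H) := ⟨rfl⟩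

lemma pow_apply_succ (φ : Monoid.End G) (n : ℕ) (x : G) :
    (φ ^ (n + 1) : Monoid.End G) x = (φ ^ n : Monoid.End G) (φ x) := by
  rw [pow_succ]; rfl

noncomputable def gprod (φ : Monoid.End G) (a : ℕ → G ⧸ MonoidHom.range (φ : G →* G)) : ℕ → G
  | 0 => 1
  | n + 1 => gprod φ a n * (φ ^ n : Monoid.End G) (a n).out

lemma gprod_prefix (φ : Monoid.End G) (a a' : ℕ → G ⧸ MonoidHom.range (φ : G →* G)) (n : ℕ)
    (h : ∀ i < n, a i = a' i) : gprod φ a n = gprod φ a' n := by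
  induction n with
  | zero => rfl
  | succ n IH =>
    simp only [gprod]
    rw [IH (fun i hi => h i (by omega)), h n (by omega)]

noncomputable def limE (φ : Monoid.End G) (a : ℕ → G ⧸ MonoidHom.range (φ : G →* G)) : InvLimit φ :=
  ⟨fun n => QuotientGroup.mk (gprod φ a n), by
    intro n
    show transMap φ n (QuotientGroup.mk (gprod φ a (n + 1))) = _
    rw [transMap, QuotientGroup.map_mk, MonoidHom.id_apply, QuotientGroup.eq]
    refine ⟨((a n).out)⁻¹, ?_⟩
    simp only [gprod, map_inv, mul_inv_rev]
    group
    exact map_zpow _ _ _⟩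

lemma limE_injective (φ : Monoid.End G) (hinj : Function.Injective φ) :
    Function.Injective (limE φ) := by
  intro a a' h
  have h' : ∀ n, (QuotientGroup.mk (gprod φ a n) :
      G ⧸ MonoidHom.range ((φ ^ n : Monoid.End G) : G →* G)) = QuotientGroup.mk (gprod φ a' n) :=
    fun n => congrFun (congrArg Subtype.val h) n
  funext n
  induction n using Nat.strong_induction_on with
  | _ n IH =>
    have hg : gprod φ a n = gprod φ a' n := gprod_prefix _ _ _ _ (fun i hi => IH i hi)
    have h2 := h' (n + 1)
    rw [QuotientGroup.eq] at h2
    obtain ⟨z, hz⟩ := h2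
    have hinjn : Function.Injective ⇑(φ ^ n : Monoid.End G) := by
      rw [Monoid.End.coe_pow]; exact hinj.iterate n
    have hz2 : (φ ^ n : Monoid.End G) (φ z)
        = (φ ^ n : Monoid.End G) (((a n).out)⁻¹ * (a' n).out) := by
      rw [← pow_apply_succ, show (φ ^ (n + 1) : Monoid.End G) z = _ from hz]
      simp only [gprod, hg, map_mul, map_inv, mul_inv_rev]
      group
    have h3 : φ z = ((a n).out)⁻¹ * (a' n).out := hinjn hz2
    have h4 : (QuotientGroup.mk ((a n).out) : G ⧸ MonoidHom.range (φ : G →* G))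
        = QuotientGroup.mk ((a' n).out) := QuotientGroup.eq.mpr ⟨z, h3⟩
    rwa [QuotientGroup.out_eq', QuotientGroup.out_eq'] at h4

lemma q0_subsingleton (φ : Monoid.End G) :
    Subsingleton (G ⧸ MonoidHom.range ((φ ^ 0 : Monoid.End G) : G →* G)) := by
  constructor
  intro p q
  rw [← QuotientGroup.out_eq' p, ← QuotientGroup.out_eq' q, QuotientGroup.eq]
  exact ⟨p.out⁻¹ * q.out, rfl⟩

noncomputable def xe (φ : Monoid.End G) (x : InvLimit φ) : ℕ → G
  | 0 => 1
  | n + 1 =>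
    xe φ x n *
      (φ ^ n : Monoid.End G)
        ((QuotientGroup.mk (Function.invFun ⇑(φ ^ n : Monoid.End G)
            ((x.1 (n + 1)).out / xe φ x n)) : G ⧸ MonoidHom.range (φ : G →* G)).out)

noncomputable def digits (φ : Monoid.End G) (x : InvLimit φ) (n : ℕ) :
    G ⧸ MonoidHom.range (φ : G →* G) :=
  QuotientGroup.mk (Function.invFun ⇑(φ ^ n : Monoid.End G) ((x.1 (n + 1)).out / xe φ x n))

lemma gprod_digits (φ : Monoid.End G) (x : InvLimit φ) (n : ℕ) :
    gprod φ (digits φ x) n = xe φ x n := by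
  induction n with
  | zero => rfl
  | succ n IH => simp only [gprod, digits, xe, IH]

lemma xe_spec (φ : Monoid.End G) (x : InvLimit φ) (n : ℕ) :
    (QuotientGroup.mk (xe φ x n) :
      G ⧸ MonoidHom.range ((φ ^ n : Monoid.End G) : G →* G)) = x.1 n := by
  induction n with
  | zero => haveI := q0_subsingleton φ; exact Subsingleton.elim _ _
  | succ n IH =>
    have htrans := x.2 n
    have hmk : (QuotientGroup.mk ((x.1 (n + 1)).out) :
        G ⧸ MonoidHom.range ((φ ^ n : Monoid.End G) : G →* G))
        = QuotientGroup.mk (xe φ x n) := by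
      have h5 : transMap φ n (QuotientGroup.mk ((x.1 (n + 1)).out))
          = QuotientGroup.mk ((x.1 (n + 1)).out) := by
        rw [transMap, QuotientGroup.map_mk, MonoidHom.id_apply]
      calc (QuotientGroup.mk ((x.1 (n + 1)).out) :
            G ⧸ MonoidHom.range ((φ ^ n : Monoid.End G) : G →* G))
          = transMap φ n (QuotientGroup.mk ((x.1 (n + 1)).out)) := h5.symm
        _ = transMap φ n (x.1 (n + 1)) := by rw [QuotientGroup.out_eq']
        _ = x.1 n := htrans
        _ = QuotientGroup.mk (xe φ x n) := IH.symm
    have hmem : ∃ u, (φ ^ n : Monoid.End G) u = (x.1 (n + 1)).out / xe φ x n := by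
      rw [QuotientGroup.eq] at hmk
      obtain ⟨u, hu⟩ := hmk
      refine ⟨u⁻¹, ?_⟩
      rw [map_inv, show (φ ^ n : Monoid.End G) u = _ from hu, div_eq_mul_inv, mul_inv_rev, inv_inv, mul_comm]
    have hw : (φ ^ n : Monoid.End G) (Function.invFun ⇑(φ ^ n : Monoid.End G)
        ((x.1 (n + 1)).out / xe φ x n)) = (x.1 (n + 1)).out / xe φ x n :=
      Function.invFun_eq hmem
    set w := Function.invFun ⇑(φ ^ n : Monoid.End G) ((x.1 (n + 1)).out / xe φ x n) with hwdef
    have hr : ((QuotientGroup.mk w : G ⧸ MonoidHom.range (φ : G →* G)).out)⁻¹ * w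
        ∈ MonoidHom.range (φ : G →* G) := by
      rw [← QuotientGroup.eq]
      exact QuotientGroup.out_eq' _
    obtain ⟨z, hz⟩ := hr
    rw [← QuotientGroup.out_eq' (x.1 (n + 1)), QuotientGroup.eq]
    refine ⟨z, ?_⟩
    show (φ ^ (n + 1) : Monoid.End G) z = _
    rw [pow_apply_succ]
    show (φ ^ n : Monoid.End G) (φ z) = _
    rw [show (φ : Monoid.End G) z = _ from hz, map_mul, map_inv, hw]
    show _ = (xe φ x n *
      (φ ^ n : Monoid.End G) ((QuotientGroup.mk w : G ⧸ MonoidHom.range (φ : G →* G)).out))⁻¹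
        * (x.1 (n + 1)).out
    rw [div_eq_mul_inv]
    group
    exact mul_right_comm _ _ _

lemma limE_surjective (φ : Monoid.End G) : Function.Surjective (limE φ) := by
  intro x
  refine ⟨digits φ x, ?_⟩
  apply Subtype.ext
  funext n
  show QuotientGroup.mk (gprod φ (digits φ x) n) = x.1 n
  rw [gprod_digits]
  exact xe_spec φ x n

lemma limE_continuous (φ : Monoid.End G) : Continuous (limE φ) := by
  apply Continuous.subtype_mk
  apply continuous_pi
  intro n
  have key : (fun a : ℕ → G ⧸ MonoidHom.range (φ : G →* G) =>
      (QuotientGroup.mk (gprod φ a n) :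
        G ⧸ MonoidHom.range ((φ ^ n : Monoid.End G) : G →* G)))
      = (fun v : Fin n → G ⧸ MonoidHom.range (φ : G →* G) =>
          (QuotientGroup.mk (gprod φ (fun i => if h : i < n then v ⟨i, h⟩ else 1) n) :
            G ⧸ MonoidHom.range ((φ ^ n : Monoid.End G) : G →* G)))
        ∘ (fun a i => a i.1) := by
    funext a
    simp only [Function.comp_apply]
    congr 1
    apply gprod_prefix
    intro i hi
    simp [hi]
  rw [key]
  exact Continuous.comp continuous_of_discreteTopology (continuous_pi fun i => continuous_apply _)

end Stmt3Aux

open Stmt3 in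
theorem statement3 {G : Type*} [CommGroup G] (φ : Monoid.End G)
    (hφinj : Function.Injective φ)
    (hfin : Finite (G ⧸ MonoidHom.range (φ : G →* G)))
    (hcard : 2 ≤ Nat.card (G ⧸ MonoidHom.range (φ : G →* G))) :
    Nonempty (InvLimit φ ≃ₜ (ℕ → Bool)) := by
  classical
  open Stmt3Aux in
  haveI := hfin
  set d := Nat.card (G ⧸ MonoidHom.range (φ : G →* G)) with hddef
  have hd : 2 ≤ d := hcard
  let eqv : (G ⧸ MonoidHom.range (φ : G →* G)) ≃ Fin d :=
    Finite.equivFin (G ⧸ MonoidHom.range (φ : G →* G))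
  -- Part A
  let EA : (ℕ → G ⧸ MonoidHom.range (φ : G →* G)) ≃ InvLimit φ :=
    Equiv.ofBijective (limE φ) ⟨limE_injective φ hφinj, limE_surjective φ⟩
  have hEA : Continuous EA := limE_continuous φ
  -- Part B
  let F : (ℕ → G ⧸ MonoidHom.range (φ : G →* G)) → (ℕ → Bool) :=
    fun a => enc d hd (fun n => (eqv (a n) : ℕ))
  let EB : (ℕ → G ⧸ MonoidHom.range (φ : G →* G)) ≃ (ℕ → Bool) :=
    { toFun := F
      invFun := fun b n => eqv.symm ⟨dec d b n, dec_lt hd b n⟩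
      left_inv := by
        intro a
        funext n
        have h1 : dec d (enc d hd fun k => (eqv (a k) : ℕ)) n = (eqv (a n) : ℕ) :=
          dec_enc hd _ (fun k => (eqv (a k)).isLt) n
        have h2 : (⟨dec d (enc d hd fun k => (eqv (a k) : ℕ)) n,
            dec_lt hd _ n⟩ : Fin d) = eqv (a n) := Fin.ext h1
        show eqv.symm _ = a n
        rw [h2, Equiv.symm_apply_apply]
      right_inv := by
        intro b
        funext m
        show enc d hd (fun n => ((eqv (eqv.symm ⟨dec d b n, dec_lt hd b n⟩) : Fin d) : ℕ)) m = b m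
        simp only [Equiv.apply_symm_apply]
        exact enc_dec hd b m }
  have hEB : Continuous EB := by
    apply continuous_pi
    intro m
    show Continuous fun a : ℕ → G ⧸ MonoidHom.range (φ : G →* G) => F a m
    have key : (fun a : ℕ → G ⧸ MonoidHom.range (φ : G →* G) => F a m)
        = (fun v : Fin (m + 1) → G ⧸ MonoidHom.range (φ : G →* G) =>
            enc d hd (fun n => if h : n < m + 1 then (eqv (v ⟨n, h⟩) : ℕ) else 0) m)
          ∘ (fun a i => a i.1) := by
      funext a
      apply enc_prefix hd
      intro i hi
      simp [Nat.lt_succ_of_le hi]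
    rw [key]
    exact Continuous.comp continuous_of_discreteTopology (continuous_pi fun i => continuous_apply _)
  haveI : T2Space (InvLimit φ) := inferInstanceAs (T2Space
    {x : (n : ℕ) → G ⧸ MonoidHom.range ((φ ^ n : Monoid.End G) : G →* G) //
      ∀ n : ℕ, transMap φ n (x (n + 1)) = x n})
  exact ⟨(hEA.homeoOfEquivCompactToT2 (f := EA)).symm.trans
    (hEB.homeoOfEquivCompactToT2 (f := EB))⟩
end
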